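/- For every n ≥ 8, Sepy has a winning strategy in the Dom-start Disjoint Domination Game on the cycle C_n. -/

import Mathlib

namespace DDG

variable {V : Type*}

/-- The closed neighborhood `N[v]` of a vertex `v`. -/
def closedNbhd (G : SimpleGraph V) (v : V) : Set V := insert v (G.neighborSet v)

/-- `D` is a dominating set of `G`: every vertex has a member of `D`
in its closed neighborhood. -/
def Dominates (G : SimpleGraph V) (D : Set V) : Prop :=
  ∀ v : V, (closedNbhd G v ∩ D).Nonempty

/-- A position of the game: the sets of purple and blue vertices. -/
structure Pos (V : Type*) where
  purple : Set V
  blue : Set V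

namespace Pos

/-- The vertex class of a color (`true` = purple, `false` = blue). -/
def colorSet (p : Pos V) (c : Bool) : Set V := if c then p.purple else p.blue

/-- The position obtained by coloring vertex `v` with color `c`. -/
def play (p : Pos V) (v : V) (c : Bool) : Pos V :=
  if c then ⟨insert v p.purple, p.blue⟩ else ⟨p.purple, insert v p.blue⟩

end Pos

/-- A legal move of the Disjoint Domination Game: select an uncolored vertex `v`
and a color `c` such that some `u ∈ N[v]` is not yet dominated in color `c`. -/
def LegalMove (G : SimpleGraph V) (p : Pos V) (v : V) (c : Bool) : Prop :=
  v ∉ p.purple ∪ p.blue ∧ ∃ u ∈ closedNbhd G v, closedNbhd G u ∩ p.colorSet c = ∅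

/-- End condition ⟨s⟩: some closed neighborhood is monochromatic; Sepy wins. -/
def SepyEnd (G : SimpleGraph V) (p : Pos V) : Prop :=
  ∃ v : V, closedNbhd G v ⊆ p.purple ∨ closedNbhd G v ⊆ p.blue

/-- End condition ⟨d⟩: both color classes are dominating sets; Dom wins. -/
def DomEnd (G : SimpleGraph V) (p : Pos V) : Prop :=
  Dominates G p.purple ∧ Dominates G p.blue

/-- `DomWins G turn p` : Dom has a winning strategy in the Disjoint Domination Game
from position `p`, where `turn = true` iff it is Dom's move. -/
inductive DomWins (G : SimpleGraph V) : Bool → Pos V → Prop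
  | terminal (turn : Bool) (p : Pos V) :
      ¬ SepyEnd G p → DomEnd G p → DomWins G turn p
  | domStep (p : Pos V) (v : V) (c : Bool) :
      ¬ SepyEnd G p → ¬ DomEnd G p → LegalMove G p v c →
      DomWins G false (p.play v c) → DomWins G true p
  | sepyStep (p : Pos V) :
      ¬ SepyEnd G p → ¬ DomEnd G p →
      (∃ v c, LegalMove G p v c) →
      (∀ v c, LegalMove G p v c → DomWins G true (p.play v c)) →
      DomWins G false p

/-- `SepyWins G turn p` : Sepy has a winning strategy in the Disjoint Domination Game
from position `p`, where `turn = true` iff it is Dom's move. -/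
inductive SepyWins (G : SimpleGraph V) : Bool → Pos V → Prop
  | terminal (turn : Bool) (p : Pos V) : SepyEnd G p → SepyWins G turn p
  | sepyStep (p : Pos V) (v : V) (c : Bool) :
      ¬ SepyEnd G p → ¬ DomEnd G p → LegalMove G p v c →
      SepyWins G true (p.play v c) → SepyWins G false p
  | domStep (p : Pos V) :
      ¬ SepyEnd G p → ¬ DomEnd G p →
      (∃ v c, LegalMove G p v c) →
      (∀ v c, LegalMove G p v c → SepyWins G false (p.play v c)) →
      SepyWins G true p

end DDG


open DDG

open scoped Fin.NatCast Fin.CommRing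

section helpers
variable {V : Type*} {m : ℕ}

private lemma colorSet_play (p : Pos V) (v : V) (d e : Bool) :
    (p.play v d).colorSet e = if d = e then insert v (p.colorSet e) else p.colorSet e := by
  cases d <;> cases e <;> simp [Pos.play, Pos.colorSet]

private lemma union_play (p : Pos V) (v : V) (d : Bool) :
    (p.play v d).purple ∪ (p.play v d).blue = insert v (p.purple ∪ p.blue) := by
  cases d <;> simp [Pos.play, Set.union_insert, Set.insert_union]

private lemma cn3 {x y z : Fin (m+2)} (hx : y - 1 = x) (hz : y + 1 = z) :
    closedNbhd (SimpleGraph.cycleGraph (m+2)) y = {x, y, z} := by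
  subst hx; subst hz
  rw [closedNbhd, SimpleGraph.cycleGraph_neighborSet]
  ext a
  simp only [Set.mem_insert_iff, Set.mem_singleton_iff]
  tauto

private lemma NE (hm : 8 ≤ m + 2) (b : Fin (m+2)) {i j : ℕ}
    (hi : i < 8) (hj : j < 8) (hij : i ≠ j) :
    b + (i : Fin (m+2)) ≠ b + (j : Fin (m+2)) := by
  intro h
  rw [add_left_cancel_iff] at h
  apply_fun Fin.val at h
  rw [Fin.val_cast_of_lt (by omega), Fin.val_cast_of_lt (by omega)] at h
  exact hij h

private lemma notDom (hm : 8 ≤ m+2) {S : Set (Fin (m+2))} (x : Fin (m+2)) (hS : S ⊆ {x}) :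
    ¬ Dominates (SimpleGraph.cycleGraph (m+2)) S := by
  intro hD
  obtain ⟨y, hy, hyS⟩ := hD (x + ((2:ℕ) : Fin (m+2)))
  have hN : closedNbhd (SimpleGraph.cycleGraph (m+2)) (x + ((2:ℕ) : Fin (m+2)))
      = {x + ((1:ℕ) : Fin (m+2)), x + ((2:ℕ) : Fin (m+2)), x + ((3:ℕ) : Fin (m+2))} :=
    cn3 (by push_cast; ring) (by push_cast; ring)
  rw [hN] at hy
  have hx := hS hyS
  simp only [Set.mem_singleton_iff] at hx
  subst hx
  simp only [Set.mem_insert_iff, Set.mem_singleton_iff] at hy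
  rcases hy with h|h|h
  · exact NE hm y (i := 0) (j := 1) (by norm_num) (by norm_num) (by norm_num)
      (by push_cast at h ⊢; linear_combination h)
  · exact NE hm y (i := 0) (j := 2) (by norm_num) (by norm_num) (by norm_num)
      (by push_cast at h ⊢; linear_combination h)
  · exact NE hm y (i := 0) (j := 3) (by norm_num) (by norm_num) (by norm_num)
      (by push_cast at h ⊢; linear_combination h)

private lemma not_nbhd (hm : 8 ≤ m+2) {S : Set (Fin (m+2))} {a a' : Fin (m+2)}
    (hS : S ⊆ {a, a'}) (v : Fin (m+2)) :
    ¬ closedNbhd (SimpleGraph.cycleGraph (m+2)) v ⊆ S := by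
  intro h
  have hN : closedNbhd (SimpleGraph.cycleGraph (m+2)) (v) = {v - 1, v, v + 1} :=
    cn3 rfl rfl
  rw [hN] at h
  have d23 : v ≠ v + 1 := fun h =>
    NE hm v (i := 0) (j := 1) (by norm_num) (by norm_num) (by norm_num)
      (by push_cast; linear_combination h)
  have d12 : v - 1 ≠ v := fun h =>
    NE hm v (i := 0) (j := 1) (by norm_num) (by norm_num) (by norm_num)
      (by push_cast; linear_combination h)
  have d13 : v - 1 ≠ v + 1 := fun h =>
    NE hm v (i := 0) (j := 2) (by norm_num) (by norm_num) (by norm_num)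
      (by push_cast; linear_combination h)
  have h1 := hS (h (by simp : v - 1 ∈ ({v - 1, v, v + 1} : Set _)))
  have h2 := hS (h (by simp : v ∈ ({v - 1, v, v + 1} : Set _)))
  have h3 := hS (h (by simp : v + 1 ∈ ({v - 1, v, v + 1} : Set _)))
  simp only [Set.mem_insert_iff, Set.mem_singleton_iff] at h1 h2 h3
  rcases h1 with h1|h1 <;> rcases h2 with h2|h2 <;> rcases h3 with h3|h3 <;>
    first
      | exact d12 (h1.trans h2.symm)
      | exact d13 (h1.trans h3.symm)
      | exact d23 (h2.trans h3.symm)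

private lemma notSepyEnd (hm : 8 ≤ m+2) {p : Pos (Fin (m+2))} (a a' : Fin (m+2))
    (hp : p.purple ⊆ {a, a'}) (hb : p.blue ⊆ {a, a'}) :
    ¬ SepyEnd (SimpleGraph.cycleGraph (m+2)) p := by
  rintro ⟨v, h | h⟩
  exacts [not_nbhd hm hp v h, not_nbhd hm hb v h]

private lemma notDomEnd (hm : 8 ≤ m+2) {p : Pos (Fin (m+2))} (x : Fin (m+2))
    (h : p.purple ⊆ {x} ∨ p.blue ⊆ {x}) :
    ¬ DomEnd (SimpleGraph.cycleGraph (m+2)) p := fun hD =>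
  h.elim (fun h => notDom hm x h hD.1) (fun h => notDom hm x h hD.2)

end helpers

section helpers2
variable {V : Type*} {m : ℕ}

private lemma purple_eq (p : Pos V) : p.colorSet true = p.purple := by simp [Pos.colorSet]
private lemma blue_eq (p : Pos V) : p.colorSet false = p.blue := by simp [Pos.colorSet]

private lemma sepyEnd_of {G : SimpleGraph V} {p : Pos V} {u : V} {e : Bool}
    (h : closedNbhd G u ⊆ p.colorSet e) : SepyEnd G p := by
  refine ⟨u, ?_⟩
  cases e
  · right; rwa [blue_eq] at h
  · left; rwa [purple_eq] at h

private lemma notSepyEnd' (hm : 8 ≤ m+2) {p : Pos (Fin (m+2))} (a a' : Fin (m+2))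
    (h : ∀ e, p.colorSet e ⊆ {a, a'}) :
    ¬ SepyEnd (SimpleGraph.cycleGraph (m+2)) p :=
  notSepyEnd hm a a' (by rw [← purple_eq]; exact h true) (by rw [← blue_eq]; exact h false)

private lemma notDomEnd' (hm : 8 ≤ m+2) {p : Pos (Fin (m+2))} (x : Fin (m+2)) (e : Bool)
    (h : p.colorSet e ⊆ {x}) : ¬ DomEnd (SimpleGraph.cycleGraph (m+2)) p := by
  apply notDomEnd hm x
  cases e
  · right; rwa [blue_eq] at h
  · left; rwa [purple_eq] at h

end helpers2

private lemma afterFirst (m : ℕ) (hn : 8 ≤ m + 2) (b : Fin (m+2)) (c : Bool) :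
    SepyWins (SimpleGraph.cycleGraph (m+2)) false
      ((⟨∅, ∅⟩ : Pos (Fin (m+2))).play (b + ((3:ℕ) : Fin (m+2))) c) := by
  have cne : ¬ (c = !c) := by cases c <;> simp
  have N1 : closedNbhd (SimpleGraph.cycleGraph (m+2)) (b + ((1:ℕ) : Fin (m+2)))
      = {b + ((0:ℕ) : Fin (m+2)), b + ((1:ℕ) : Fin (m+2)), b + ((2:ℕ) : Fin (m+2))} :=
    cn3 (by push_cast; ring) (by push_cast; ring)
  have N2 : closedNbhd (SimpleGraph.cycleGraph (m+2)) (b + ((2:ℕ) : Fin (m+2)))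
      = {b + ((1:ℕ) : Fin (m+2)), b + ((2:ℕ) : Fin (m+2)), b + ((3:ℕ) : Fin (m+2))} :=
    cn3 (by push_cast; ring) (by push_cast; ring)
  have N3 : closedNbhd (SimpleGraph.cycleGraph (m+2)) (b + ((3:ℕ) : Fin (m+2)))
      = {b + ((2:ℕ) : Fin (m+2)), b + ((3:ℕ) : Fin (m+2)), b + ((4:ℕ) : Fin (m+2))} :=
    cn3 (by push_cast; ring) (by push_cast; ring)
  have N4 : closedNbhd (SimpleGraph.cycleGraph (m+2)) (b + ((4:ℕ) : Fin (m+2)))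
      = {b + ((3:ℕ) : Fin (m+2)), b + ((4:ℕ) : Fin (m+2)), b + ((5:ℕ) : Fin (m+2))} :=
    cn3 (by push_cast; ring) (by push_cast; ring)
  have N5 : closedNbhd (SimpleGraph.cycleGraph (m+2)) (b + ((5:ℕ) : Fin (m+2)))
      = {b + ((4:ℕ) : Fin (m+2)), b + ((5:ℕ) : Fin (m+2)), b + ((6:ℕ) : Fin (m+2))} :=
    cn3 (by push_cast; ring) (by push_cast; ring)
  have N6 : closedNbhd (SimpleGraph.cycleGraph (m+2)) (b + ((6:ℕ) : Fin (m+2)))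
      = {b + ((5:ℕ) : Fin (m+2)), b + ((6:ℕ) : Fin (m+2)), b + ((7:ℕ) : Fin (m+2))} :=
    cn3 (by push_cast; ring) (by push_cast; ring)
  set p1 : Pos (Fin (m+2)) := (⟨∅, ∅⟩ : Pos (Fin (m+2))).play (b + ((3:ℕ) : Fin (m+2))) c
    with hp1def
  have cs1 : ∀ e, p1.colorSet e = if c = e then {b + ((3:ℕ) : Fin (m+2))} else ∅ := by
    intro e
    rw [hp1def, colorSet_play]
    have : (⟨∅, ∅⟩ : Pos (Fin (m+2))).colorSet e = ∅ := by cases e <;> simp [Pos.colorSet]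
    rw [this]
    split <;> simp
  have un1 : p1.purple ∪ p1.blue = {b + ((3:ℕ) : Fin (m+2))} := by
    rw [hp1def, union_play]
    show insert _ ((∅ : Set (Fin (m+2))) ∪ ∅) = _
    simp
  apply SepyWins.sepyStep _ (b + ((4:ℕ) : Fin (m+2))) c
  · exact notSepyEnd' hn (b + ((3:ℕ) : Fin (m+2))) (b + ((3:ℕ) : Fin (m+2)))
      (fun e => by rw [cs1]; split <;> simp)
  · exact notDomEnd' hn b (!c) (by rw [cs1, if_neg cne]; simp)
  · refine ⟨?_, b + ((5:ℕ) : Fin (m+2)), ?_, ?_⟩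
    · rw [un1]
      simp only [Set.mem_singleton_iff]
      exact NE hn b (by norm_num) (by norm_num) (by norm_num)
    · rw [N4]; simp
    · rw [N5, cs1, if_pos rfl, Set.eq_empty_iff_forall_notMem]
      rintro x ⟨hx1, hx2⟩
      simp only [Set.mem_insert_iff, Set.mem_singleton_iff] at hx1 hx2
      rcases hx1 with rfl|rfl|rfl <;>
        exact absurd hx2 (NE hn b (by norm_num) (by norm_num) (by norm_num))
  -- position p2
  set p2 : Pos (Fin (m+2)) := p1.play (b + ((4:ℕ) : Fin (m+2))) c with hp2def
  have cs2 : ∀ e, p2.colorSet e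
      = if c = e then {b + ((4:ℕ) : Fin (m+2)), b + ((3:ℕ) : Fin (m+2))} else ∅ := by
    intro e
    rw [hp2def, colorSet_play, cs1]
    by_cases h : c = e <;> simp [h]
  have un2 : p2.purple ∪ p2.blue
      = {b + ((4:ℕ) : Fin (m+2)), b + ((3:ℕ) : Fin (m+2))} := by
    rw [hp2def, union_play, un1]
  apply SepyWins.domStep
  · exact notSepyEnd' hn (b + ((4:ℕ) : Fin (m+2))) (b + ((3:ℕ) : Fin (m+2)))
      (fun e => by
        rw [cs2]
        split
        · exact subset_rfl
        · exact Set.empty_subset _)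
  · exact notDomEnd' hn b (!c) (by rw [cs2, if_neg cne]; simp)
  · refine ⟨b + ((0:ℕ) : Fin (m+2)), !c, ?_, b + ((0:ℕ) : Fin (m+2)), Set.mem_insert _ _, ?_⟩
    · rw [un2]
      simp only [Set.mem_insert_iff, Set.mem_singleton_iff]
      push_neg
      exact ⟨NE hn b (by norm_num) (by norm_num) (by norm_num),
        NE hn b (by norm_num) (by norm_num) (by norm_num)⟩
    · rw [cs2, if_neg cne, Set.inter_empty]
  -- Dom's second move
  intro v d hleg
  have hv34 : v ∉ ({b + ((4:ℕ) : Fin (m+2)), b + ((3:ℕ) : Fin (m+2))} : Set (Fin (m+2))) := by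
    rw [← un2]; exact hleg.1
  set p3 : Pos (Fin (m+2)) := p2.play v d with hp3def
  have inner : ∀ e, p2.colorSet e
      ⊆ ({b + ((4:ℕ) : Fin (m+2)), b + ((3:ℕ) : Fin (m+2))} : Set (Fin (m+2))) := by
    intro e
    rw [cs2]
    split
    · exact subset_rfl
    · exact Set.empty_subset _
  have cs3sub : ∀ e, p3.colorSet e
      ⊆ insert v ({b + ((4:ℕ) : Fin (m+2)), b + ((3:ℕ) : Fin (m+2))} : Set (Fin (m+2))) := by
    intro e
    rw [hp3def, colorSet_play]
    split
    · exact Set.insert_subset_insert (inner e)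
    · exact (inner e).trans (Set.subset_insert _ _)
  have cs3lo : ({b + ((4:ℕ) : Fin (m+2)), b + ((3:ℕ) : Fin (m+2))} : Set (Fin (m+2)))
      ⊆ p3.colorSet c := by
    rw [hp3def, colorSet_play, cs2, if_pos rfl]
    split
    · exact Set.subset_insert _ _
    · exact subset_rfl
  have cs3other : p3.colorSet (!c) ⊆ {v} := by
    rw [hp3def, colorSet_play, cs2, if_neg cne]
    split <;> simp
  have un3 : p3.purple ∪ p3.blue
      = insert v ({b + ((4:ℕ) : Fin (m+2)), b + ((3:ℕ) : Fin (m+2))} : Set (Fin (m+2))) := by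
    rw [hp3def, union_play, un2]
  by_cases hS : SepyEnd (SimpleGraph.cycleGraph (m+2)) p3
  · exact SepyWins.terminal _ _ hS
  by_cases hB : v = b + ((5:ℕ) : Fin (m+2)) ∨ v = b + ((6:ℕ) : Fin (m+2))
      ∨ v = b + ((7:ℕ) : Fin (m+2))
  · -- Sepy plays b+2 with color c, winning via N[b+3]
    refine SepyWins.sepyStep _ (b + ((2:ℕ) : Fin (m+2))) c hS
      (notDomEnd' hn v (!c) cs3other) ⟨?_, b + ((1:ℕ) : Fin (m+2)), ?_, ?_⟩
      (SepyWins.terminal _ _ (sepyEnd_of (u := b + ((3:ℕ) : Fin (m+2))) (e := c) ?_))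
    · rw [un3]
      simp only [Set.mem_insert_iff, Set.mem_singleton_iff]
      push_neg
      refine ⟨?_, NE hn b (by norm_num) (by norm_num) (by norm_num),
        NE hn b (by norm_num) (by norm_num) (by norm_num)⟩
      rcases hB with rfl|rfl|rfl <;>
        exact NE hn b (by norm_num) (by norm_num) (by norm_num)
    · rw [N2]; simp
    · rw [N1, Set.eq_empty_iff_forall_notMem]
      rintro x ⟨hx1, hx2⟩
      have hx2' := cs3sub c hx2
      simp only [Set.mem_insert_iff, Set.mem_singleton_iff] at hx1 hx2'
      rcases hB with rfl|rfl|rfl <;> rcases hx1 with rfl|rfl|rfl <;>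
          rcases hx2' with h|h|h <;>
        exact absurd h (NE hn b (by norm_num) (by norm_num) (by norm_num))
    · rw [N3, colorSet_play, if_pos rfl]
      intro x hx
      simp only [Set.mem_insert_iff, Set.mem_singleton_iff] at hx ⊢
      rcases hx with rfl|rfl|rfl
      · exact Or.inl rfl
      · exact Or.inr (cs3lo (by simp))
      · exact Or.inr (cs3lo (by simp))
  · -- Sepy plays b+5 with color c, winning via N[b+4]
    push_neg at hB
    refine SepyWins.sepyStep _ (b + ((5:ℕ) : Fin (m+2))) c hS
      (notDomEnd' hn v (!c) cs3other) ⟨?_, b + ((6:ℕ) : Fin (m+2)), ?_, ?_⟩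
      (SepyWins.terminal _ _ (sepyEnd_of (u := b + ((4:ℕ) : Fin (m+2))) (e := c) ?_))
    · rw [un3]
      simp only [Set.mem_insert_iff, Set.mem_singleton_iff]
      push_neg
      exact ⟨fun h => hB.1 h.symm,
        NE hn b (by norm_num) (by norm_num) (by norm_num),
        NE hn b (by norm_num) (by norm_num) (by norm_num)⟩
    · rw [N5]; simp
    · rw [N6, Set.eq_empty_iff_forall_notMem]
      rintro x ⟨hx1, hx2⟩
      have hx2' := cs3sub c hx2
      simp only [Set.mem_insert_iff, Set.mem_singleton_iff] at hx1 hx2'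
      rcases hx1 with rfl|rfl|rfl <;> rcases hx2' with h|h|h <;>
        first
          | exact absurd h (NE hn b (by norm_num) (by norm_num) (by norm_num))
          | exact hB.1 h.symm
          | exact hB.2.1 h.symm
          | exact hB.2.2 h.symm
    · rw [N4, colorSet_play, if_pos rfl]
      intro x hx
      simp only [Set.mem_insert_iff, Set.mem_singleton_iff] at hx ⊢
      rcases hx with rfl|rfl|rfl
      · exact Or.inr (cs3lo (by simp))
      · exact Or.inr (cs3lo (by simp))
      · exact Or.inl rfl

theorem statement5 (n : ℕ) (hn : 8 ≤ n) :
    SepyWins (SimpleGraph.cycleGraph n) true ⟨∅, ∅⟩ := by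
  obtain ⟨m, rfl⟩ : ∃ m, n = m + 2 := ⟨n - 2, by omega⟩
  apply SepyWins.domStep
  · exact notSepyEnd' hn 0 0 (fun e => by cases e <;> simp [Pos.colorSet])
  · exact notDomEnd' hn 0 true (by simp [Pos.colorSet])
  · refine ⟨0, true, ?_, 0, Set.mem_insert _ _, ?_⟩
    · show (0 : Fin (m+2)) ∉ (∅ ∪ ∅ : Set (Fin (m+2)))
      simp
    · show _ ∩ (∅ : Set (Fin (m+2))) = ∅
      simp
  · intro w c _
    obtain ⟨b, rfl⟩ : ∃ b, w = b + ((3:ℕ) : Fin (m+2)) :=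
      ⟨w - ((3:ℕ) : Fin (m+2)), by ring⟩
    exact afterFirst m hn b c
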